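/- Let F be a field and V a finite-dimensional vector space over F equipped with a bilinear form ω : V → V → F that is alternating (ω v v = 0 for all v ∈ V) and nondegenerate (if ω u v = 0 for all v ∈ V then u = 0). Then the dimension of V is even, say Module.finrank F V = 2 * n, and there exists a basis e₁, …, e_n, f₁, …, f_n of V such that ω (e i) (f j) = 1 if i = j and 0 otherwise, ω (e i) (e j) = 0, and ω (f i) (f j) = 0 for all i, j. -/

import Mathlib

open Module LinearMap

private theorem darboux_aux {F : Type*} [Field F] (k : ℕ) :
    ∀ {V : Type*} [AddCommGroup V] [Module F V] [FiniteDimensional F V]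
      (ω : LinearMap.BilinForm F V), ω.IsAlt → ω.Nondegenerate →
      Module.finrank F V = k →
      ∃ n : ℕ, Module.finrank F V = 2 * n ∧
        ∃ b : Basis (Fin n ⊕ Fin n) F V,
          (∀ i j, ω (b (Sum.inl i)) (b (Sum.inr j)) = if i = j then 1 else 0) ∧
          (∀ i j, ω (b (Sum.inl i)) (b (Sum.inl j)) = 0) ∧
          (∀ i j, ω (b (Sum.inr i)) (b (Sum.inr j)) = 0) := by
  induction k using Nat.strong_induction_on with
  | _ k IH =>
    intro V _ _ _ ω halt hnd hdim
    rcases eq_or_ne k 0 with rfl | hk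
    · -- zero-dimensional case
      have hsub : Subsingleton V := by
        rw [← Module.finrank_zero_iff (R := F)]; exact hdim
      exact ⟨0, by simp [hdim], Basis.empty V,
        fun i _ => i.elim0, fun i _ => i.elim0, fun i _ => i.elim0⟩
    · -- positive-dimensional case
      have hVnt : Nontrivial V := by
        apply Module.nontrivial_of_finrank_pos (R := F); omega
      obtain ⟨u, hu0⟩ := exists_ne (0 : V)
      have : ¬ (∀ v, ω u v = 0) := fun h => hu0 (hnd.1 u h)
      push_neg at this
      obtain ⟨v, hv⟩ := this
      set v' : V := (ω u v)⁻¹ • v with hv'def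
      have huv' : ω u v' = 1 := by
        rw [hv'def, map_smul, smul_eq_mul, inv_mul_cancel₀ hv]
      have hrefl : ω.IsRefl := halt.isRefl
      have hv'u : ω v' u = -1 := by rw [← LinearMap.IsAlt.neg halt u v', huv']
      set P : Submodule F V := Submodule.span F {u, v'} with hPdef
      have huP : u ∈ P := Submodule.subset_span (by simp)
      have hv'P : v' ∈ P := Submodule.subset_span (by simp)
      have hPnd : (ω.restrict P).Nondegenerate := by
        refine (LinearMap.IsRefl.nondegenerate_iff_separatingLeft (LinearMap.IsAlt.isRefl (B := ω.restrict P) (fun x => halt x))).mpr ?_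
        rintro ⟨p, hp⟩ h
        obtain ⟨a, b, rfl⟩ := Submodule.mem_span_pair.mp hp
        have ha : a = 0 := by
          have := h ⟨v', hv'P⟩
          simpa [LinearMap.BilinForm.restrict_apply, huv', halt v'] using this
        have hb : b = 0 := by
          have := h ⟨u, huP⟩
          simpa [LinearMap.BilinForm.restrict_apply, hv'u, halt u, ha] using this
        simp [ha, hb]
      set W : Submodule F V := ω.orthogonal P with hWdef
      have hcompl : IsCompl P W :=
        ω.isCompl_orthogonal_of_restrict_nondegenerate hrefl hPnd
      have hWmem : ∀ w ∈ W, ∀ p ∈ P, ω p w = 0 := fun w hw p hp => hw p hp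
      have hWnd : (ω.restrict W).Nondegenerate := by
        refine (LinearMap.IsRefl.nondegenerate_iff_separatingLeft (LinearMap.IsAlt.isRefl (B := ω.restrict W) (fun x => halt x))).mpr ?_
        rintro ⟨w, hw⟩ h
        have : w = 0 := by
          apply hnd.1
          intro x
          have hx : x ∈ P ⊔ W := hcompl.sup_eq_top ▸ Submodule.mem_top
          obtain ⟨p, hp, w₂, hw₂, rfl⟩ := Submodule.mem_sup.mp hx
          have h1 : ω w p = 0 := hrefl p w (hWmem w hw p hp)
          have h2 : ω w w₂ = 0 := h ⟨w₂, hw₂⟩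
          simp [h1, h2]
        simpa using this
      have hWalt : (ω.restrict W).IsAlt := fun w => halt w
      have hdims : finrank F P + finrank F W = finrank F V :=
        Submodule.finrank_add_eq_of_isCompl hcompl
      have hPpos : 0 < finrank F P := by
        rcases Nat.eq_zero_or_pos (finrank F P) with h0 | h
        · exact absurd (Submodule.finrank_eq_zero.mp h0 ▸ huP) (by simpa using hu0)
        · exact h
      have hWlt : finrank F W < k := by omega
      obtain ⟨m, hWdim, bW, h1, h2, h3⟩ :=
        IH (finrank F W) hWlt (ω.restrict W) hWalt hWnd rfl
      -- build the family on V
      set g : Fin (m + 1) ⊕ Fin (m + 1) → V :=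
        Sum.elim (Fin.cons u fun i => (bW (Sum.inl i) : V))
          (Fin.cons v' fun i => (bW (Sum.inr i) : V)) with hgdef
      have hgW : ∀ i : Fin m, ((bW (Sum.inl i) : V) ∈ W ∧ (bW (Sum.inr i) : V) ∈ W) :=
        fun i => ⟨(bW (Sum.inl i)).2, (bW (Sum.inr i)).2⟩
      have hWu : ∀ w ∈ W, ω u w = 0 := fun w hw => hWmem w hw u huP
      have hWv' : ∀ w ∈ W, ω v' w = 0 := fun w hw => hWmem w hw v' hv'P
      have hgef : ∀ i j, ω (g (Sum.inl i)) (g (Sum.inr j)) = if i = j then 1 else 0 := by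
        intro i j
        induction i using Fin.cases with
        | zero =>
          induction j using Fin.cases with
          | zero => simpa [hgdef] using huv'
          | succ j => simpa [hgdef, Fin.succ_ne_zero j, (Fin.succ_ne_zero j).symm] using hWu _ (hgW j).2
        | succ i =>
          induction j using Fin.cases with
          | zero =>
            simpa [hgdef, (Fin.succ_ne_zero i)] using hrefl v' _ (hWv' _ (hgW i).1)
          | succ j =>
            have := h1 i j
            simpa [hgdef, LinearMap.BilinForm.restrict_apply, Fin.succ_inj] using this
      have hgee : ∀ i j, ω (g (Sum.inl i)) (g (Sum.inl j)) = 0 := by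
        intro i j
        induction i using Fin.cases with
        | zero =>
          induction j using Fin.cases with
          | zero => simpa [hgdef] using halt u
          | succ j => simpa [hgdef] using hWu _ (hgW j).1
        | succ i =>
          induction j using Fin.cases with
          | zero => simpa [hgdef] using hrefl u _ (hWu _ (hgW i).1)
          | succ j => simpa [hgdef, LinearMap.BilinForm.restrict_apply] using h2 i j
      have hgff : ∀ i j, ω (g (Sum.inr i)) (g (Sum.inr j)) = 0 := by
        intro i j
        induction i using Fin.cases with
        | zero =>
          induction j using Fin.cases with
          | zero => simpa [hgdef] using halt v'
          | succ j => simpa [hgdef] using hWv' _ (hgW j).2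
        | succ i =>
          induction j using Fin.cases with
          | zero => simpa [hgdef] using hrefl v' _ (hWv' _ (hgW i).2)
          | succ j => simpa [hgdef, LinearMap.BilinForm.restrict_apply] using h3 i j
      have hgfe : ∀ i j, ω (g (Sum.inr i)) (g (Sum.inl j)) = if j = i then -1 else 0 := by
        intro i j
        rw [← LinearMap.IsAlt.neg halt, hgef]
        split <;> simp
      -- linear independence
      have li : LinearIndependent F g := by
        rw [Fintype.linearIndependent_iff]
        intro c hc i
        have key : ∀ x : V, ω (∑ i, c i • g i) x = ∑ i, c i * ω (g i) x := by
          intro x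
          rw [map_sum]
          simp [smul_eq_mul]
        match i with
        | Sum.inl i =>
          have := key (g (Sum.inr i))
          rw [hc] at this
          simp only [Fintype.sum_sum_type, hgef, hgff, mul_zero, mul_ite, mul_one,
            Finset.sum_add_distrib, Finset.sum_const_zero, add_zero, map_zero,
            LinearMap.zero_apply, Finset.sum_ite_eq', Finset.mem_univ, if_true] at this
          exact this.symm
        | Sum.inr i =>
          have := key (g (Sum.inl i))
          rw [hc] at this
          simp only [Fintype.sum_sum_type, hgee, hgfe, mul_zero, mul_ite, mul_neg, mul_one,
            Finset.sum_add_distrib, Finset.sum_const_zero, zero_add, map_zero,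
            LinearMap.zero_apply, Finset.sum_ite_eq, Finset.sum_ite_eq', Finset.mem_univ, if_true] at this
          have : -c (Sum.inr i) = 0 := this.symm
          exact neg_eq_zero.mp this
      -- spanning
      have hspan : ⊤ ≤ Submodule.span F (Set.range g) := by
        rw [← hcompl.sup_eq_top]
        apply sup_le
        · rw [hPdef, Submodule.span_le]
          rintro x (rfl | rfl)
          · exact Submodule.subset_span ⟨Sum.inl 0, by simp [hgdef]⟩
          · exact Submodule.subset_span ⟨Sum.inr 0, by simp [hgdef]⟩
        · intro w hw
          have hmem : (⟨w, hw⟩ : W) ∈ Submodule.span F (Set.range bW) := bW.mem_span _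
          have : w ∈ Submodule.map W.subtype (Submodule.span F (Set.range bW)) :=
            ⟨⟨w, hw⟩, hmem, rfl⟩
          rw [Submodule.map_span] at this
          refine Submodule.span_mono ?_ this
          rintro x ⟨y, ⟨i, rfl⟩, rfl⟩
          match i with
          | Sum.inl i => exact ⟨Sum.inl i.succ, by simp [hgdef]⟩
          | Sum.inr i => exact ⟨Sum.inr i.succ, by simp [hgdef]⟩
      set b : Basis (Fin (m + 1) ⊕ Fin (m + 1)) F V := Basis.mk li hspan with hbdef
      have hb : ∀ i, b i = g i := fun i => Basis.mk_apply li hspan i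
      refine ⟨m + 1, ?_, b, ?_, ?_, ?_⟩
      · rw [Module.finrank_eq_card_basis b]
        simp; ring
      · intro i j; rw [hb, hb]; exact hgef i j
      · intro i j; rw [hb, hb]; exact hgee i j
      · intro i j; rw [hb, hb]; exact hgff i j

/-- A finite-dimensional symplectic vector space (a space with an alternating nondegenerate
bilinear form) has even dimension `2 * n` and admits a symplectic (Darboux) basis
`e₁, …, e_n, f₁, …, f_n` with `ω (e i) (f j) = δ_{ij}`, `ω (e i) (e j) = 0`, and
`ω (f i) (f j) = 0`. -/
theorem symplectic_space_even_dim_and_darboux_basis {F : Type*} [Field F]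
    {V : Type*} [AddCommGroup V] [Module F V] [FiniteDimensional F V]
    (ω : V →ₗ[F] V →ₗ[F] F)
    (halt : ∀ v : V, ω v v = 0)
    (hnd : ∀ u : V, (∀ v : V, ω u v = 0) → u = 0) :
    ∃ n : ℕ, Module.finrank F V = 2 * n ∧
      ∃ b : Module.Basis (Fin n ⊕ Fin n) F V,
        (∀ i j, ω (b (Sum.inl i)) (b (Sum.inr j)) = if i = j then 1 else 0) ∧
        (∀ i j, ω (b (Sum.inl i)) (b (Sum.inl j)) = 0) ∧
        (∀ i j, ω (b (Sum.inr i)) (b (Sum.inr j)) = 0) := by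
  exact darboux_aux (Module.finrank F V) ω halt
    ((LinearMap.IsRefl.nondegenerate_iff_separatingLeft (LinearMap.IsAlt.isRefl (halt : ω.IsAlt))).mpr hnd) rfl
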